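/- arXiv:cs/0604001 — 2 statements merged into one kernel-verified Lean document; each statement's English description precedes it below -/
import Mathlib

section
/- Suppose a family S of continuous real-valued functions on a Hilbert space H has the universal approximation property on compacts (i.e., for every compact K ⊆ H, S restricted to K is uniformly dense in C(K, ℝ)), and suppose (Π_p) are orthogonal projections onto nested finite-dimensional subspaces with ‖Π_p g − g‖ → 0 for all g ∈ H, and that S is closed under precomposition with each Π_p. Then the family {F ∘ Π_p : F ∈ S, p ∈ ℕ} is uniformly dense in C(K, ℝ) for every compact K ⊆ H. -/
/-- If a family `S` of continuous real-valued functions on a Hilbert space has the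
universal approximation property on compacts, `(Π p)` are orthogonal projections onto
nested finite-dimensional subspaces converging pointwise to the identity, and `S` is
closed under precomposition with each `Π p`, then the family `{F ∘ Π p}` is uniformly
dense in `C(K, ℝ)` for every compact `K`. -/
theorem stmt_6 {H : Type*} [NormedAddCommGroup H] [InnerProductSpace ℝ H] [CompleteSpace H]
    (S : Set (H → ℝ)) (hScont : ∀ F ∈ S, Continuous F)
    (hSuniv : ∀ K : Set H, IsCompact K → ∀ f : H → ℝ, ContinuousOn f K →
      ∀ ε > (0 : ℝ), ∃ F ∈ S, ∀ g ∈ K, |F g - f g| < ε)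
    (V : ℕ → Submodule ℝ H) [∀ p, FiniteDimensional ℝ (V p)]
    (hVmono : ∀ p, V p ≤ V (p + 1))
    (hpt : ∀ g : H, Filter.Tendsto
      (fun p => ‖(Submodule.orthogonalProjectionOnto (V p) g : H) - g‖) Filter.atTop (nhds 0))
    (hScomp : ∀ F ∈ S, ∀ p : ℕ,
      (fun g => F (Submodule.orthogonalProjectionOnto (V p) g : H)) ∈ S) :
    ∀ K : Set H, IsCompact K → ∀ f : H → ℝ, ContinuousOn f K → ∀ ε > (0 : ℝ),
      ∃ F ∈ S, ∃ p : ℕ, ∀ g ∈ K,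
        |F (Submodule.orthogonalProjectionOnto (V p) g : H) - f g| < ε := by
  intro K hK f hf ε hε
  -- the projections, as continuous maps H → H
  set P : ℕ → H → H := fun p g => (Submodule.orthogonalProjectionOnto (V p) g : H) with hP
  have hPcont : ∀ p, Continuous (P p) := fun p =>
    continuous_subtype_val.comp (Submodule.orthogonalProjectionOnto (V p)).continuous
  have hPlip : ∀ p (x y : H), ‖P p x - P p y‖ ≤ ‖x - y‖ := by
    intro p x y
    have : P p x - P p y = (Submodule.orthogonalProjectionOnto (V p) (x - y) : H) := by
      simp [hP, map_sub]
    rw [this]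
    calc ‖(Submodule.orthogonalProjectionOnto (V p) (x - y) : H)‖
        ≤ ‖Submodule.orthogonalProjectionOnto (V p)‖ * ‖x - y‖ :=
          (Submodule.orthogonalProjectionOnto (V p)).le_opNorm _
      _ ≤ 1 * ‖x - y‖ := by
          gcongr; exact Submodule.orthogonalProjectionOnto_norm_le _
      _ = ‖x - y‖ := one_mul _
  -- Tietze extension of f to all of H
  have hKc : IsClosed K := hK.isClosed
  obtain ⟨f', hf'⟩ := (ContinuousMap.mk _ (continuousOn_iff_continuous_restrict.1 hf)
    ).exists_restrict_eq hKc
  have hf'eq : ∀ g ∈ K, f' g = f g := by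
    intro g hg
    have := congrFun (congrArg DFunLike.coe hf') ⟨g, hg⟩
    simpa using this
  -- Claim: there is p with |f'(P p g) - f' g| < ε/2 for all g ∈ K
  have claim : ∃ p : ℕ, ∀ g ∈ K, |f' (P p g) - f' g| < ε / 2 := by
    by_contra hcon
    push_neg at hcon
    choose g hgK hge using hcon
    obtain ⟨a, haK, φ, hφ, hga⟩ := hK.tendsto_subseq hgK
    -- P (φ k) (g (φ k)) → a
    have h1 : Filter.Tendsto (fun k => ‖P (φ k) (g (φ k)) - a‖) Filter.atTop (nhds 0) := by
      have hbound : ∀ k, ‖P (φ k) (g (φ k)) - a‖ ≤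
          ‖g (φ k) - a‖ + ‖P (φ k) a - a‖ := by
        intro k
        calc ‖P (φ k) (g (φ k)) - a‖
            ≤ ‖P (φ k) (g (φ k)) - P (φ k) a‖ + ‖P (φ k) a - a‖ := norm_sub_le_norm_sub_add_norm_sub _ _ _
          _ ≤ ‖g (φ k) - a‖ + ‖P (φ k) a - a‖ := by gcongr; exact hPlip _ _ _
      have h2 : Filter.Tendsto (fun k => ‖g (φ k) - a‖ + ‖P (φ k) a - a‖)
          Filter.atTop (nhds 0) := by
        have hA : Filter.Tendsto (fun k => ‖g (φ k) - a‖) Filter.atTop (nhds 0) := by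
          have := hga
          rw [tendsto_iff_norm_sub_tendsto_zero] at this
          exact this
        have hB : Filter.Tendsto (fun k => ‖P (φ k) a - a‖) Filter.atTop (nhds 0) :=
          (hpt a).comp hφ.tendsto_atTop
        simpa using hA.add hB
      exact squeeze_zero (fun k => norm_nonneg _) hbound h2
    have h1' : Filter.Tendsto (fun k => P (φ k) (g (φ k))) Filter.atTop (nhds a) := by
      rw [tendsto_iff_norm_sub_tendsto_zero]
      exact h1
    have h3 : Filter.Tendsto (fun k => f' (P (φ k) (g (φ k))) - f' (g (φ k)))
        Filter.atTop (nhds 0) := by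
      have := (f'.continuous.tendsto a).comp h1'
      have h4 := (f'.continuous.tendsto a).comp hga
      simpa using this.sub h4
    have h5 : Filter.Tendsto (fun k => |f' (P (φ k) (g (φ k))) - f' (g (φ k))|)
        Filter.atTop (nhds 0) := by
      simpa using h3.abs
    have h6 : (ε / 2 : ℝ) ≤ 0 := le_of_tendsto_of_tendsto tendsto_const_nhds h5
      (Filter.Eventually.of_forall fun k => hge (φ k))
    linarith
  obtain ⟨p, hp⟩ := claim
  -- compact set containing K and P p '' K
  have hM : IsCompact (K ∪ P p '' K) := hK.union (hK.image (hPcont p))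
  obtain ⟨F, hFS, hF⟩ := hSuniv _ hM f' (f'.continuous.continuousOn) (ε / 2) (by linarith)
  refine ⟨F, hFS, p, fun g hg => ?_⟩
  have hPg : P p g ∈ K ∪ P p '' K := Or.inr ⟨g, hg, rfl⟩
  have e1 : |F (P p g) - f' (P p g)| < ε / 2 := hF _ hPg
  have e2 : |f' (P p g) - f' g| < ε / 2 := hp g hg
  have : F (P p g) - f g = (F (P p g) - f' (P p g)) + (f' (P p g) - f' g) := by
    rw [hf'eq g hg]; ring
  calc |F (P p g) - f g| = |(F (P p g) - f' (P p g)) + (f' (P p g) - f' g)| := by rw [this]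
    _ ≤ |F (P p g) - f' (P p g)| + |f' (P p g) - f' g| := abs_add_le _ _
    _ < ε := by linarith
end

section
/- Let Y ∈ L² and G_p = π_p(G). Define C_p* = inf over measurable f : ℝ^p → ℝ of E[(f(G_p) − Y)²]^{1/2} and C* = inf over measurable h : H → ℝ of E[(h(G) − Y)²]^{1/2}. Then lim_{p→∞} C_p* = C*. -/
open MeasureTheory
open scoped RealInnerProductSpace ENNReal NNReal

lemma ofReal_sq_eq (x : ℝ) : ENNReal.ofReal (x ^ 2) = (‖x‖₊ : ℝ≥0∞) ^ (2 : ℝ) := by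
  have h1 : x ^ 2 = ‖x‖ ^ (2 : ℝ) := by
    rw [Real.norm_eq_abs, show (2 : ℝ) = ((2 : ℕ) : ℝ) by norm_num, Real.rpow_natCast, sq_abs]
  rw [h1, ← ENNReal.ofReal_rpow_of_nonneg (norm_nonneg _) (by norm_num),
    ofReal_norm, enorm_eq_nnnorm]

lemma errConv {Ω : Type*} [MeasurableSpace Ω] (μ : Measure Ω) (u : Ω → ℝ) :
    (∫⁻ ω, ENNReal.ofReal ((u ω) ^ 2) ∂μ) ^ (1 / 2 : ℝ) = eLpNorm u 2 μ := by
  rw [eLpNorm_eq_lintegral_rpow_enorm_toReal (by norm_num) (by norm_num), ENNReal.toReal_ofNat]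
  congr 1
  exact lintegral_congr fun ω => ofReal_sq_eq (u ω)


/-- The best root mean square error for predicting `Y` from the first `p` coordinates
`π_p(G) = (⟨G,φ_1⟩,…,⟨G,φ_p⟩)` of `G`. -/
noncomputable def bestCoordError {Ω : Type*} [MeasurableSpace Ω] (μ : Measure Ω)
    {H : Type*} [NormedAddCommGroup H] [InnerProductSpace ℝ H] [CompleteSpace H]
    (φ : HilbertBasis ℕ ℝ H) (G : Ω → H) (Y : Ω → ℝ) (p : ℕ) : ℝ≥0∞ :=
  sInf { c : ℝ≥0∞ | ∃ f : (Fin p → ℝ) → ℝ, Measurable f ∧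
    c = (∫⁻ ω, ENNReal.ofReal ((f (fun k : Fin p => ⟪G ω, (φ k : H)⟫) - Y ω) ^ 2) ∂μ)
          ^ (1 / 2 : ℝ) }

/-- The best root mean square error for predicting `Y` from `G` itself. -/
noncomputable def bestError {Ω : Type*} [MeasurableSpace Ω] (μ : Measure Ω)
    {H : Type*} [MeasurableSpace H] (G : Ω → H) (Y : Ω → ℝ) : ℝ≥0∞ :=
  sInf { c : ℝ≥0∞ | ∃ h : H → ℝ, Measurable h ∧
    c = (∫⁻ ω, ENNReal.ofReal ((h (G ω) - Y ω) ^ 2) ∂μ) ^ (1 / 2 : ℝ) }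

/-- `C_p* → C*` as `p → ∞`: the best root mean square error achievable from the first
`p` coordinates of `G` converges to the best error achievable from `G`. -/
theorem stmt_12 {Ω : Type*} [m0 : MeasurableSpace Ω] (μ : Measure Ω) [IsProbabilityMeasure μ]
    {H : Type*} [NormedAddCommGroup H] [InnerProductSpace ℝ H] [CompleteSpace H]
    [SecondCountableTopology H] [MeasurableSpace H] [BorelSpace H]
    (φ : HilbertBasis ℕ ℝ H) (G : Ω → H) (hG : Measurable G)
    (Y : Ω → ℝ) (hY : MemLp Y 2 μ) :
    Filter.Tendsto (fun p => bestCoordError μ φ G Y p) Filter.atTop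
      (nhds (bestError μ G Y)) := by
  set D : ℕ → ℝ≥0∞ := fun p => bestCoordError μ φ G Y p with hD
  -- antitonicity
  have hanti : Antitone D := by
    intro p q hpq
    apply sInf_le_sInf
    rintro c ⟨f, hf, rfl⟩
    refine ⟨fun x => f (fun k => x (Fin.castLE hpq k)),
      hf.comp (measurable_pi_lambda _ fun k => measurable_pi_apply _), ?_⟩
    simp [Fin.coe_castLE]
  have hmono := tendsto_atTop_iInf hanti
  suffices hkey : (⨅ p, D p) = bestError μ G Y by rwa [hkey] at hmono
  apply le_antisymm
  · -- ⨅ D ≤ bestError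
    apply le_sInf
    rintro b ⟨h, hh, rfl⟩
    rw [errConv]
    set B := eLpNorm (fun ω => h (G ω) - Y ω) 2 μ with hB
    by_cases hBtop : B = ∞
    · rw [hBtop]; exact le_top
    -- h ∘ G is in L²
    have hsubAESM : AEStronglyMeasurable (fun ω => h (G ω) - Y ω) μ :=
      ((hh.comp hG).aestronglyMeasurable).sub hY.1
    have hsub : MemLp (fun ω => h (G ω) - Y ω) 2 μ := ⟨hsubAESM, lt_top_iff_ne_top.2 hBtop⟩
    have hZ : MemLp (fun ω => h (G ω)) 2 μ := by
      have h1 := hsub.add hY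
      have h2 : ((fun ω => h (G ω) - Y ω) + Y) = fun ω => h (G ω) := by
        ext ω; simp
      rwa [h2] at h1
    set ν := μ.map G with hν
    haveI : IsProbabilityMeasure ν := Measure.isProbabilityMeasure_map hG.aemeasurable
    have hhν : MemLp h 2 ν :=
      (memLp_map_measure_iff hh.aestronglyMeasurable hG.aemeasurable).2 hZ
    refine ENNReal.le_of_forall_pos_le_add fun ε hε _ => ?_
    set δ : ℝ≥0∞ := (ε : ℝ≥0∞) / 2 with hδdef
    have hδ : δ ≠ 0 := by
      simp [hδdef, ENNReal.div_eq_zero_iff, hε.ne']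
    obtain ⟨c, hc_close, hc_mem⟩ :=
      hhν.exists_boundedContinuous_eLpNorm_sub_le (by norm_num) hδ
    -- the finite-rank projections
    set P : ℕ → H → H := fun p x => ∑ k ∈ Finset.range p, ⟪x, (φ k : H)⟫ • (φ k : H) with hP
    have hPcont : ∀ p, Continuous (P p) := by
      intro p
      exact continuous_finset_sum _ fun k _ =>
        (continuous_id.inner continuous_const).smul continuous_const
    have hPtend : ∀ x : H, Filter.Tendsto (fun p => P p x) Filter.atTop (nhds x) := by
      intro x
      have h1 := (φ.hasSum_repr x).tendsto_sum_nat
      have h2 : ∀ k, (φ.repr x k : ℝ) • (φ k : H) = ⟪x, (φ k : H)⟫ • (φ k : H) := by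
        intro k
        rw [φ.repr_apply_apply, real_inner_comm]
      simpa [hP, h2] using h1
    -- the error functions
    set F : ℕ → Ω → ℝ := fun p ω => c (P p (G ω)) - c (G ω) with hF
    have hFmeas : ∀ p, Measurable (F p) := fun p =>
      ((c.continuous.comp (hPcont p)).measurable.comp hG).sub
        (c.continuous.measurable.comp hG)
    -- dominated convergence for the squared errors
    have hJ : Filter.Tendsto (fun p => ∫⁻ ω, (‖F p ω‖₊ : ℝ≥0∞) ^ (2 : ℝ) ∂μ)
        Filter.atTop (nhds 0) := by
      have h0 : (0 : ℝ≥0∞) = ∫⁻ _, (0 : ℝ≥0∞) ∂μ := by simp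
      rw [h0]
      refine tendsto_lintegral_of_dominated_convergence
        (fun _ => ((2 * ‖c‖₊ : ℝ≥0) : ℝ≥0∞) ^ (2 : ℝ))
        (fun p => ENNReal.continuous_rpow_const.measurable.comp (hFmeas p).enorm)
        (fun p => Filter.Eventually.of_forall fun ω => ?_) ?_
        (Filter.Eventually.of_forall fun ω => ?_)
      · -- bound
        refine ENNReal.rpow_le_rpow ?_ (by norm_num)
        refine ENNReal.coe_le_coe.2 ?_
        calc ‖F p ω‖₊ ≤ ‖c (P p (G ω))‖₊ + ‖c (G ω)‖₊ := nnnorm_sub_le _ _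
          _ ≤ ‖c‖₊ + ‖c‖₊ := add_le_add (c.nnnorm_coe_le_nnnorm _) (c.nnnorm_coe_le_nnnorm _)
          _ = 2 * ‖c‖₊ := (two_mul _).symm
      · -- integrable bound
        rw [lintegral_const, measure_univ, mul_one]
        exact ENNReal.rpow_ne_top_of_nonneg (by norm_num) ENNReal.coe_ne_top
      · -- pointwise convergence
        have hF0 : Filter.Tendsto (fun p => F p ω) Filter.atTop (nhds 0) := by
          have := ((c.continuous.tendsto (G ω)).comp (hPtend (G ω))).sub
            (tendsto_const_nhds (x := c (G ω)))
          simpa [hF] using this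
        have : Filter.Tendsto (fun p => (‖F p ω‖₊ : ℝ≥0∞)) Filter.atTop (nhds 0) := by
          rw [show (0 : ℝ≥0∞) = ((0 : ℝ≥0) : ℝ≥0∞) by simp]
          exact ENNReal.tendsto_coe.2 (by simpa using hF0.nnnorm)
        have h2 := this.ennrpow_const (2 : ℝ)
        simpa [ENNReal.zero_rpow_of_pos] using h2
    -- choose p with small error
    have hδtop : δ ≠ ∞ := (ENNReal.div_lt_top ENNReal.coe_ne_top (by norm_num)).ne
    have hδ2pos : (0 : ℝ≥0∞) < δ ^ (2 : ℝ) :=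
      ENNReal.rpow_pos (pos_iff_ne_zero.2 hδ) hδtop
    obtain ⟨p, hp⟩ := (hJ.eventually_lt_const hδ2pos).exists
    have hFp : eLpNorm (F p) 2 μ ≤ δ := by
      rw [eLpNorm_eq_lintegral_rpow_enorm_toReal (by norm_num) (by norm_num), ENNReal.toReal_ofNat]
      calc (∫⁻ ω, (‖F p ω‖₊ : ℝ≥0∞) ^ (2 : ℝ) ∂μ) ^ (1 / 2 : ℝ)
          ≤ (δ ^ (2 : ℝ)) ^ (1 / 2 : ℝ) := ENNReal.rpow_le_rpow hp.le (by norm_num)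
        _ = δ := by rw [← ENNReal.rpow_mul]; norm_num
    -- the finite-dimensional predictor
    set f : (Fin p → ℝ) → ℝ := fun v => c (∑ k : Fin p, v k • (φ (k : ℕ) : H)) with hfdef
    have hfmeas : Measurable f := by
      have hcont : Continuous fun v : Fin p → ℝ => ∑ k : Fin p, v k • (φ (k : ℕ) : H) :=
        continuous_finset_sum _ fun k _ => (continuous_apply k).smul continuous_const
      exact c.continuous.measurable.comp hcont.measurable
    have hfapp : ∀ ω, f (fun k : Fin p => ⟪G ω, (φ (k : ℕ) : H)⟫) = c (P p (G ω)) := by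
      intro ω
      simp only [hfdef, hP]
      congr 1
      exact Fin.sum_univ_eq_sum_range (fun k => ⟪G ω, (φ k : H)⟫ • (φ k : H)) p
    -- membership gives a bound on D p
    have hDp : D p ≤ eLpNorm (fun ω => f (fun k : Fin p => ⟪G ω, (φ (k : ℕ) : H)⟫) - Y ω) 2 μ :=
      sInf_le ⟨f, hfmeas, (errConv μ _).symm⟩
    -- triangle inequality
    have hAESM1 : AEStronglyMeasurable (F p) μ := (hFmeas p).aestronglyMeasurable
    have hAESM2 : AEStronglyMeasurable (fun ω => c (G ω) - h (G ω)) μ :=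
      ((c.continuous.measurable.comp hG).sub (hh.comp hG)).aestronglyMeasurable
    have htri : eLpNorm (fun ω => c (P p (G ω)) - Y ω) 2 μ ≤
        eLpNorm (F p) 2 μ + (eLpNorm (fun ω => c (G ω) - h (G ω)) 2 μ + B) := by
      have hdecomp : (fun ω => c (P p (G ω)) - Y ω) =
          (fun ω => F p ω + ((c (G ω) - h (G ω)) + (h (G ω) - Y ω))) := by
        ext ω; simp only [hF]; ring
      rw [hdecomp]
      calc eLpNorm (fun ω => F p ω + ((c (G ω) - h (G ω)) + (h (G ω) - Y ω))) 2 μ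
          ≤ eLpNorm (F p) 2 μ +
            eLpNorm (fun ω => (c (G ω) - h (G ω)) + (h (G ω) - Y ω)) 2 μ :=
            eLpNorm_add_le hAESM1 (hAESM2.add hsubAESM) one_le_two
        _ ≤ eLpNorm (F p) 2 μ + (eLpNorm (fun ω => c (G ω) - h (G ω)) 2 μ + B) := by
            gcongr
            exact eLpNorm_add_le hAESM2 hsubAESM one_le_two
    -- the middle term equals the ν-distance
    have hmid : eLpNorm (fun ω => c (G ω) - h (G ω)) 2 μ ≤ δ := by
      have hmap : eLpNorm (fun x => c x - h x) 2 ν = eLpNorm (fun ω => c (G ω) - h (G ω)) 2 μ :=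
        eLpNorm_map_measure (c.continuous.aestronglyMeasurable.sub hh.aestronglyMeasurable)
          hG.aemeasurable
      rw [← hmap]
      have : (fun x => c x - h x) = -(h - fun x => c x) := by ext x; simp
      rw [this, eLpNorm_neg]
      exact hc_close
    -- conclude
    calc (⨅ q, D q) ≤ D p := iInf_le _ p
      _ ≤ eLpNorm (fun ω => f (fun k : Fin p => ⟪G ω, (φ (k : ℕ) : H)⟫) - Y ω) 2 μ := hDp
      _ = eLpNorm (fun ω => c (P p (G ω)) - Y ω) 2 μ := by
          congr 1; ext ω; rw [hfapp]
      _ ≤ eLpNorm (F p) 2 μ + (eLpNorm (fun ω => c (G ω) - h (G ω)) 2 μ + B) := htri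
      _ ≤ δ + (δ + B) := add_le_add hFp (add_le_add hmid le_rfl)
      _ = B + ε := by
          rw [← add_assoc, hδdef, ENNReal.add_halves, add_comm]
  · -- bestError ≤ ⨅ D
    refine le_iInf fun p => ?_
    apply sInf_le_sInf
    rintro b ⟨f, hf, rfl⟩
    exact ⟨fun x => f (fun k : Fin p => ⟪x, (φ (k : ℕ) : H)⟫),
      hf.comp (measurable_pi_lambda _ fun k =>
        (continuous_id.inner continuous_const).measurable), rfl⟩
end
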